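/- arXiv:0911.3532 — 3 statements merged into one kernel-verified Lean document; each statement's English description precedes it below -/
import Mathlib

section
/- Let L be a Lie algebra over a field K. Then L is perfect (i.e., [L, L] = L) if and only if every maximal proper Lie subalgebra of L is self-normalizing. -/
/-- A Lie algebra `L` over a field is perfect (`[L,L] = L`) iff every maximal proper Lie
subalgebra of `L` is self-normalizing. -/
theorem stmt_2 (K : Type*) [Field K] (L : Type*) [LieRing L] [LieAlgebra K L] :
    (⁅(⊤ : LieIdeal K L), (⊤ : LieIdeal K L)⁆ : LieIdeal K L) = ⊤ ↔
      ∀ A : LieSubalgebra K L, A ≠ ⊤ →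
        (∀ B : LieSubalgebra K L, A ≤ B → B = A ∨ B = ⊤) → A.normalizer = A := by
  constructor
  · -- forward: perfect → every maximal proper subalgebra is self-normalizing
    intro hperf A hA hmax
    rcases hmax A.normalizer (LieSubalgebra.le_normalizer A) with h | h
    · exact h
    · exfalso
      -- A is an ideal
      have hideal : ∀ x : L, ∀ a ∈ A, ⁅x, a⁆ ∈ A := by
        intro x a ha
        have hx : x ∈ A.normalizer := h ▸ LieSubalgebra.mem_top x
        exact (LieSubalgebra.mem_normalizer_iff A x).mp hx a ha
      -- pick z ∉ A
      obtain ⟨z, hz⟩ : ∃ z : L, z ∉ A := by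
        by_contra hc
        push_neg at hc
        exact hA (by ext x; simp [hc x])
      -- B = A + K z is a subalgebra
      set Bsub : Submodule K L := A.toSubmodule ⊔ (K ∙ z) with hBsub
      have hmem : ∀ w ∈ Bsub, ∃ a ∈ A, ∃ c : K, w = a + c • z := by
        intro w hw
        rw [hBsub, Submodule.mem_sup] at hw
        obtain ⟨a, ha, s, hs, rfl⟩ := hw
        obtain ⟨c, rfl⟩ := Submodule.mem_span_singleton.mp hs
        exact ⟨a, ha, c, rfl⟩
      have hbracket : ∀ w ∈ Bsub, ∀ w' ∈ Bsub, ⁅w, w'⁆ ∈ A := by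
        intro w hw w' hw'
        obtain ⟨a, ha, c, rfl⟩ := hmem w hw
        obtain ⟨a', ha', c', rfl⟩ := hmem w' hw'
        have h1 : ⁅a, a'⁆ ∈ A := A.lie_mem' ha ha'
        have h2 : ⁅a, z⁆ ∈ A := by
          have h'' := hideal z a ha
          have h' : ⁅a, z⁆ = -⁅z, a⁆ := by rw [← lie_skew]
          rw [h']; exact neg_mem h''
        have h3 : ⁅z, a'⁆ ∈ A := hideal z a' ha'
        simp only [add_lie, lie_add, lie_smul, smul_lie, lie_self, smul_zero, add_zero]
        exact add_mem (add_mem h1 (A.smul_mem c h3)) (A.smul_mem c' h2)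
      let B : LieSubalgebra K L :=
        { toSubmodule := Bsub
          lie_mem' := fun {x y} hx hy => (le_sup_left : A.toSubmodule ≤ Bsub) (hbracket x hx y hy) }
      have hAB : A ≤ B := fun x hx => (le_sup_left : A.toSubmodule ≤ Bsub) hx
      have hzB : z ∈ B := (le_sup_right : (K ∙ z) ≤ Bsub) (Submodule.mem_span_singleton_self z)
      rcases hmax B hAB with hBA | hBT
      · exact hz (hBA ▸ hzB)
      · -- B = ⊤, so [L,L] ⊆ A, contradicting perfectness
        have hall : ∀ x : L, x ∈ Bsub := by
          intro x
          have : x ∈ B := hBT ▸ LieSubalgebra.mem_top x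
          exact this
        let I : LieIdeal K L :=
          { A.toSubmodule with
            lie_mem := fun {x m} hm => hideal x m hm }
        have hle : (⁅(⊤ : LieIdeal K L), (⊤ : LieIdeal K L)⁆ : LieIdeal K L) ≤ I := by
          rw [LieSubmodule.lie_le_iff]
          intro x _ m _
          exact hbracket x (hall x) m (hall m)
        rw [hperf] at hle
        apply hA
        ext x
        simp only [LieSubalgebra.mem_top, iff_true]
        exact hle (LieSubmodule.mem_top x)
  · -- backward: contrapositive
    intro hall
    by_contra hne
    -- the derived subalgebra, as a submodule, is proper
    set S : Submodule K L :=
      ((⁅(⊤ : LieIdeal K L), (⊤ : LieIdeal K L)⁆ : LieIdeal K L) : Submodule K L) with hS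
    have hSlt : S < ⊤ := by
      rw [lt_top_iff_ne_top]
      intro hc
      exact hne (LieSubmodule.toSubmodule_eq_top _ |>.mp hc)
    obtain ⟨f, hf0, hfmap⟩ := S.exists_dual_map_eq_bot_of_lt_top hSlt inferInstance
    have hSker : S ≤ LinearMap.ker f := by
      intro x hx
      rw [LinearMap.mem_ker]
      have : f x ∈ S.map f := Submodule.mem_map_of_mem hx
      rwa [hfmap, Submodule.mem_bot] at this
    have hbr : ∀ x y : L, ⁅x, y⁆ ∈ LinearMap.ker f := by
      intro x y
      exact hSker (LieSubmodule.lie_mem_lie (LieSubmodule.mem_top x) (LieSubmodule.mem_top y))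
    let A : LieSubalgebra K L :=
      { toSubmodule := LinearMap.ker f
        lie_mem' := fun {x y} _ _ => hbr x y }
    have hAne : A ≠ ⊤ := by
      intro hc
      apply hf0
      rw [← LinearMap.ker_eq_top]
      have : A.toSubmodule = (⊤ : LieSubalgebra K L).toSubmodule := by rw [hc]
      exact this
    -- f is surjective, so ker f is a coatom
    have hfsurj : Function.Surjective f := by
      obtain ⟨x, hx⟩ : ∃ x, f x ≠ 0 := by
        by_contra hc
        push_neg at hc
        exact hf0 (LinearMap.ext fun x => hc x)
      intro c
      exact ⟨(c / f x) • x, by simp [div_mul_cancel₀, hx]⟩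
    have hcoatom : IsCoatom (LinearMap.ker f) :=
      LinearMap.isCoatom_ker_of_surjective hfsurj
    have hmax : ∀ B : LieSubalgebra K L, A ≤ B → B = A ∨ B = ⊤ := by
      intro B hAB
      have hle : LinearMap.ker f ≤ B.toSubmodule := hAB
      rcases eq_or_lt_of_le hle with heq | hlt
      · left
        rw [← LieSubalgebra.toSubmodule_inj]
        exact heq.symm
      · right
        have h2 : B.toSubmodule = ⊤ := hcoatom.2 _ hlt
        rw [← LieSubalgebra.toSubmodule_inj]
        simpa using h2
    have hnorm : A.normalizer = ⊤ := by
      ext x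
      simp only [LieSubalgebra.mem_top, iff_true]
      rw [LieSubalgebra.mem_normalizer_iff]
      intro y _
      exact hbr x y
    have := hall A hAne hmax
    rw [hnorm] at this
    exact hAne this.symm
end

section
/- In the Lie algebra Vec₁ of formal vector fields on the line vanishing at 0, spanned by {xᵏ∂ : k ≥ 1} with bracket [xᵃ∂, xᵇ∂] = (b−a)x^{a+b−1}∂, the only ideals are Span{x²∂} ⊕ Span{xᵏ∂ : k ≥ 4} and the subspaces Span{xᵏ∂ : k ≥ N} for N ≥ 1 (together with 0). -/
section Aux

variable {L : Type*} [LieRing L] [LieAlgebra ℝ L]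

private lemma repr_ad0 (e : Module.Basis ℕ ℝ L)
    (he : ∀ m n : ℕ, ⁅e m, e n⁆ = ((n : ℝ) - (m : ℝ)) • e (m + n)) (x : L) (n : ℕ) :
    e.repr ⁅e 0, x⁆ n = (n : ℝ) * e.repr x n := by
  have key : ((Finsupp.lapply n).comp (e.repr.toLinearMap ∘ₗ (LieAlgebra.ad ℝ L (e 0))))
      = ((n : ℝ) • ((Finsupp.lapply n).comp e.repr.toLinearMap)) := by
    refine e.ext fun k => ?_
    simp only [LinearMap.comp_apply, LieAlgebra.ad_apply, he 0 k, Nat.cast_zero, sub_zero,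
      zero_add, map_smul, LinearMap.smul_apply, Finsupp.lapply_apply, Module.Basis.repr_self,
      Finsupp.smul_apply, Finsupp.single_apply, smul_eq_mul]
    by_cases h : k = n <;> simp [h]
  have := LinearMap.congr_fun key x
  simpa using this

private lemma vdm (e : Module.Basis ℕ ℝ L)
    (he : ∀ m n : ℕ, ⁅e m, e n⁆ = ((n : ℝ) - (m : ℝ)) • e (m + n)) (I : LieIdeal ℝ L) :
    ∀ c : ℕ, ∀ x ∈ I, (e.repr x).support.card ≤ c → ∀ n, e.repr x n ≠ 0 → e n ∈ I := by
  intro c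
  induction c with
  | zero =>
    intro x hx hc n hn
    have : (e.repr x).support = ∅ := Finset.card_eq_zero.mp (Nat.le_zero.mp hc)
    exact absurd (Finsupp.notMem_support_iff.mp (by simp [this])) hn
  | succ c ih =>
    intro x hx hc n hn
    have hns : n ∈ (e.repr x).support := Finsupp.mem_support_iff.mpr hn
    by_cases hall : ∀ m ∈ (e.repr x).support, m = n
    · set cn := e.repr x n with hcn
      have hx' : x = cn • e n := by
        apply e.repr.injective
        ext k
        rcases eq_or_ne k n with rfl | hk
        · simp [hcn]
        · have hk' : k ∉ (e.repr x).support := fun hk' => hk (hall k hk')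
          simp [Finsupp.notMem_support_iff.mp hk', Finsupp.single_apply, Ne.symm hk]
      have hrw : e n = cn⁻¹ • x := by
        rw [hx', smul_smul, inv_mul_cancel₀ hn, one_smul]
      rw [hrw]
      exact I.smul_mem _ hx
    · push_neg at hall
      obtain ⟨m, hm, hmn⟩ := hall
      set y := ⁅e 0, x⁆ - (m : ℝ) • x with hy
      have hyI : y ∈ I := I.sub_mem (lie_mem_right ℝ L I _ _ hx) (I.smul_mem _ hx)
      have hyrepr : ∀ k, e.repr y k = ((k : ℝ) - m) * e.repr x k := by
        intro k
        rw [hy]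
        simp only [map_sub, map_smul, Finsupp.sub_apply, Finsupp.smul_apply, smul_eq_mul,
          sub_mul, repr_ad0 e he]
      have hsub : (e.repr y).support ⊆ (e.repr x).support.erase m := by
        intro k hk
        rw [Finsupp.mem_support_iff, hyrepr] at hk
        refine Finset.mem_erase.mpr ⟨?_, Finsupp.mem_support_iff.mpr ?_⟩
        · rintro rfl; simp at hk
        · intro h0; rw [h0, mul_zero] at hk; exact hk rfl
      have hcard : (e.repr y).support.card ≤ c := by
        have h1 := Finset.card_le_card hsub
        rw [Finset.card_erase_of_mem hm] at h1
        omega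
      have hyn : e.repr y n ≠ 0 := by
        rw [hyrepr]
        exact mul_ne_zero (sub_ne_zero_of_ne (by exact_mod_cast hmn.symm)) hn
      exact ih y hyI hcard n hyn

private lemma step (e : Module.Basis ℕ ℝ L)
    (he : ∀ m n : ℕ, ⁅e m, e n⁆ = ((n : ℝ) - (m : ℝ)) • e (m + n)) (I : LieIdeal ℝ L) {n : ℕ} (hn : e n ∈ I) {m : ℕ} (hmn : m ≠ n) :
    e (m + n) ∈ I := by
  have h : ((n : ℝ) - m) • e (m + n) ∈ I := by
    rw [← he m n]; exact lie_mem_right ℝ L I _ _ hn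
  have hne : (n : ℝ) - (m : ℝ) ≠ 0 := sub_ne_zero_of_ne (by exact_mod_cast hmn.symm)
  have hrw : e (m + n) = ((n : ℝ) - m)⁻¹ • (((n : ℝ) - m) • e (m + n)) := by
    rw [smul_smul, inv_mul_cancel₀ hne, one_smul]
  rw [hrw]
  exact I.smul_mem _ h

private lemma span_eq (e : Module.Basis ℕ ℝ L)
    (he : ∀ m n : ℕ, ⁅e m, e n⁆ = ((n : ℝ) - (m : ℝ)) • e (m + n)) (I : LieIdeal ℝ L) :
    I.toSubmodule = Submodule.span ℝ {x : L | ∃ n : ℕ, e n ∈ I ∧ x = e n} := by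
  apply le_antisymm
  · intro x hx
    have hx2 : ∑ k ∈ (e.repr x).support, e.repr x k • e k = x := by
      have h := e.linearCombination_repr x
      rwa [Finsupp.linearCombination_apply, Finsupp.sum] at h
    rw [← hx2]
    refine Submodule.sum_mem _ fun k hk => Submodule.smul_mem _ _ (Submodule.subset_span ?_)
    exact ⟨k, vdm e he I _ x hx le_rfl k (Finsupp.mem_support_iff.mp hk), rfl⟩
  · rw [Submodule.span_le]
    rintro _ ⟨n, hn, rfl⟩
    exact hn

end Aux

/-- Classification of the ideals of `Vec₁`, the Lie algebra of formal vector fields on the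
line vanishing at `0`.  `Vec₁` is presented by a basis `e : ℕ → L`, where `e n` stands for
`x^(n+1)∂`, with bracket `⁅x^a∂, x^b∂⁆ = (b - a)·x^(a+b-1)∂`, i.e.
`⁅e m, e n⁆ = (n - m) • e (m + n)`.  The only ideals are `0`,
`Span{x²∂} ⊕ Span{xᵏ∂ : k ≥ 4} = Span({e 1} ∪ {e n : n ≥ 3})`, and the subspaces
`Span{xᵏ∂ : k ≥ N}` for `N ≥ 1`, i.e. `Span{e n : n ≥ N'}` for `N' ≥ 0`. -/
theorem stmt_4 (L : Type*) [LieRing L] [LieAlgebra ℝ L] (e : Module.Basis ℕ ℝ L)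
    (he : ∀ m n : ℕ, ⁅e m, e n⁆ = ((n : ℝ) - (m : ℝ)) • e (m + n))
    (I : LieIdeal ℝ L) :
    I.toSubmodule = ⊥ ∨
    I.toSubmodule = Submodule.span ℝ ({e 1} ∪ {x : L | ∃ n : ℕ, 3 ≤ n ∧ x = e n}) ∨
    ∃ N : ℕ, I.toSubmodule = Submodule.span ℝ {x : L | ∃ n : ℕ, N ≤ n ∧ x = e n} := by
  classical
  by_cases h0 : ∀ n : ℕ, e n ∉ I
  · left
    have hset : {x : L | ∃ n : ℕ, e n ∈ I ∧ x = e n} = ∅ := by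
      ext x
      simp only [Set.mem_setOf_eq, Set.mem_empty_iff_false, iff_false, not_exists]
      rintro n ⟨hn, rfl⟩
      exact h0 n hn
    rw [span_eq e he I, hset, Submodule.span_empty]
  · push_neg at h0
    have hex : ∃ n, e n ∈ I := h0
    set N := Nat.find hex with hN
    have hNI : e N ∈ I := Nat.find_spec hex
    have hmin : ∀ k, e k ∈ I → N ≤ k := fun k hk => Nat.find_min' hex hk
    by_cases h12 : N = 1 ∧ e 2 ∉ I
    · right; left
      have hiff : ∀ k, e k ∈ I ↔ (k = 1 ∨ 3 ≤ k) := by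
        intro k
        constructor
        · intro hk
          have h1 := hmin k hk
          rw [h12.1] at h1
          rcases Nat.lt_or_ge k 3 with h | h
          · interval_cases k
            · exact Or.inl rfl
            · exact absurd hk h12.2
          · exact Or.inr h
        · rintro (rfl | h)
          · exact h12.1 ▸ hNI
          · have hst : e ((k - 1) + 1) ∈ I := step e he I (h12.1 ▸ hNI) (by omega)
            rwa [Nat.sub_add_cancel (by omega)] at hst
      rw [span_eq e he I]
      congr 1
      ext x
      simp only [Set.mem_setOf_eq, Set.mem_union, Set.mem_singleton_iff]
      constructor
      · rintro ⟨n, hn, rfl⟩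
        rcases (hiff n).mp hn with rfl | h
        · exact Or.inl rfl
        · exact Or.inr ⟨n, h, rfl⟩
      · rintro (rfl | ⟨n, h, rfl⟩)
        · exact ⟨1, (hiff 1).mpr (Or.inl rfl), rfl⟩
        · exact ⟨n, (hiff n).mpr (Or.inr h), rfl⟩
    · right; right
      refine ⟨N, ?_⟩
      have hup : ∀ k, N ≤ k → e k ∈ I := by
        intro k hk
        rcases eq_or_lt_of_le hk with rfl | hlt
        · exact hNI
        by_cases h2 : k = 2 * N
        · rcases eq_or_ne N 1 with hN1 | hNne
          · have h2I : e 2 ∈ I := by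
              by_contra hc
              exact h12 ⟨hN1, hc⟩
            have hk2 : k = 2 := by omega
            rwa [hk2]
          · have hN2 : 2 ≤ N := by omega
            have hA : e (1 + N) ∈ I := step e he I hNI (by omega)
            have hB : e ((N - 1) + (1 + N)) ∈ I := step e he I hA (by omega)
            have heq : (N - 1) + (1 + N) = k := by omega
            rwa [heq] at hB
        · have hst : e ((k - N) + N) ∈ I := step e he I hNI (by omega)
          rwa [Nat.sub_add_cancel hk] at hst
      have hiff : ∀ k, e k ∈ I ↔ N ≤ k := fun k => ⟨hmin k, hup k⟩
      rw [span_eq e he I]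
      congr 1
      ext x
      simp only [Set.mem_setOf_eq]
      constructor
      · rintro ⟨n, hn, rfl⟩; exact ⟨n, (hiff n).mp hn, rfl⟩
      · rintro ⟨n, hn, rfl⟩; exact ⟨n, (hiff n).mpr hn, rfl⟩
end

section
/- Let g be a finite-dimensional real Lie algebra that does not contain two nonzero elements X, Y with [X, Y] = Y. Then any Lie algebra homomorphism f : Vec₁ → g vanishes on the ideal Span{xᵏ∂ : k ≥ 2} of divergence-zero-at-0 elements; equivalently, the image of f is at most one-dimensional. -/
/-- If the finite-dimensional real Lie algebra `g` contains no two nonzero elements `X, Y`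
with `⁅X, Y⁆ = Y`, then any Lie algebra homomorphism `f : Vec₁ → g` vanishes on the ideal
`Span{xᵏ∂ : k ≥ 2}`.  `Vec₁` is presented by a basis `e : ℕ → L` with `e n = x^(n+1)∂` and
bracket `⁅e m, e n⁆ = (n - m) • e (m + n)`; the ideal in question is `Span{e n : n ≥ 1}`. -/
theorem stmt_9 (L : Type*) [LieRing L] [LieAlgebra ℝ L]
    (g : Type*) [LieRing g] [LieAlgebra ℝ g] [FiniteDimensional ℝ g]
    (hg : ¬ ∃ X Y : g, X ≠ 0 ∧ Y ≠ 0 ∧ ⁅X, Y⁆ = Y)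
    (e : Module.Basis ℕ ℝ L)
    (he : ∀ m n : ℕ, ⁅e m, e n⁆ = ((n : ℝ) - (m : ℝ)) • e (m + n))
    (f : L →ₗ⁅ℝ⁆ g) :
    ∀ v ∈ Submodule.span ℝ {x : L | ∃ n : ℕ, 1 ≤ n ∧ x = e n}, f v = 0 := by
  have key : ∀ n : ℕ, 1 ≤ n → f (e n) = 0 := by
    intro n hn
    by_contra hne
    have hb : ⁅f (e 0), f (e n)⁆ = (n : ℝ) • f (e n) := by
      rw [← f.map_lie, he 0 n]
      simp
    have hnR : (n : ℝ) ≠ 0 := Nat.cast_ne_zero.mpr (by omega)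
    by_cases h0 : f (e 0) = 0
    · rw [h0, zero_lie] at hb
      exact hne (by simpa [smul_eq_zero, hnR] using hb.symm)
    · refine hg ⟨(n : ℝ)⁻¹ • f (e 0), f (e n), ?_, hne, ?_⟩
      · simp [smul_eq_zero, hnR, h0]
      · rw [smul_lie, hb, smul_smul, inv_mul_cancel₀ hnR, one_smul]
  intro v hv
  induction hv using Submodule.span_induction with
  | mem x hx =>
      obtain ⟨n, hn, rfl⟩ := hx
      exact key n hn
  | zero => simp
  | add x y _ _ hx hy => rw [map_add f, hx, hy, add_zero]
  | smul c x _ hx => rw [map_smul f, hx, smul_zero]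
end
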